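/- Let κ be a regular cardinal such that B and C are locally κ-presentable categories (with finite products) and such that the Day convolution of any two κ-accessible functors B ⥤ C is κ-accessible. Then the Day convolution bifunctor ∗ : Func_κ(B, C) × Func_κ(B, C) ⥤ Func_κ(B, C) is itself a κ-accessible functor, i.e. it preserves κ-filtered colimits (equivalently, pointwise in each variable separately). -/

import Mathlib

open CategoryTheory CategoryTheory.Limits Opposite

universe w v v' v'' u u' u''

/-- A category `J` is `κ`-filtered if every diagram in `J` indexed by a category
with fewer than `κ` arrows admits a cocone. -/
def IsCardinalFilteredCat (κ : Cardinal.{w}) (J : Type u) [Category.{v} J] : Prop :=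
  ∀ (A : Type w) (_ : SmallCategory A), Cardinal.mk (Arrow A) < κ →
    ∀ F : A ⥤ J, Nonempty (Limits.Cocone F)

/-- A functor is `κ`-accessible if it preserves colimits of every small
`κ`-filtered shape. -/
def PreservesCardinalFilteredColimits (κ : Cardinal.{w})
    {B : Type u} [Category.{v} B] {C : Type u'} [Category.{v'} C] (F : B ⥤ C) : Prop :=
  ∀ (J : Type w) (_ : SmallCategory J), IsCardinalFilteredCat κ J →
    PreservesColimitsOfShape J F

/-- A functor is accessible if it preserves `κ`-filtered colimits for some
regular cardinal `κ`. -/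
def IsAccessibleFunctor {B : Type u} [Category.{v} B] {C : Type u'} [Category.{v'} C]
    (F : B ⥤ C) : Prop :=
  ∃ κ : Cardinal.{w}, κ.IsRegular ∧ PreservesCardinalFilteredColimits κ F

/-- The canonical cocone on the diagram of all objects of the full subcategory `S`
mapping to `b`, whose point is `b`. -/
def canonicalCoconeOfSub {B : Type u} [Category.{v} B] (S : Set B) (b : B) :
    Cocone (CostructuredArrow.proj (ObjectProperty.ι (· ∈ S)) b ⋙
      ObjectProperty.ι (· ∈ S)) where
  pt := b
  ι :=
    { app := fun g => g.hom
      naturality := fun g g' φ => (CostructuredArrow.w φ).trans (Category.comp_id _).symm }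

/-- A set of objects `S` is dense if every object of `B` is the colimit of the
canonical diagram over it of objects of `S`. -/
def IsDenseSub {B : Type u} [Category.{v} B] (S : Set B) : Prop :=
  ∀ b : B, Nonempty (IsColimit (canonicalCoconeOfSub S b))

/-- A category is locally `κ`-presentable if `κ` is regular, the category is
cocomplete, and it has a small dense full subcategory of `κ`-compact objects,
i.e. of objects `b` such that `Hom(b, -)` preserves `κ`-filtered colimits. -/
structure IsLocallyPresentable (κ : Cardinal.{w}) (B : Type u) [Category.{v} B] : Prop where
  isRegular : κ.IsRegular
  hasColimits : HasColimitsOfSize.{w, w} B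
  exists_dense_compacts : ∃ S : Set B, Small.{w} S ∧
    (∀ b ∈ S, PreservesCardinalFilteredColimits κ (coyoneda.obj (op b))) ∧
    IsDenseSub S

/-- The (uncurried) binary product functor of a category with binary products. -/
noncomputable def prodUncurried (B : Type u) [Category.{v} B] [HasBinaryProducts B] :
    B × B ⥤ B :=
  Functor.uncurry.obj Limits.prod.functor

/-- Given `F G : B ⥤ C`, this is the functor `B × B ⥤ C` sending `(x, y)` to
`F x ⨯ G y`; its pointwise left Kan extension along the binary product functor
of `B` is the Day convolution `F ∗ G`. -/
noncomputable def dayInput {B : Type u} [Category.{v} B] {C : Type u'} [Category.{v'} C]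
    [HasBinaryProducts C] (F G : B ⥤ C) : B × B ⥤ C :=
  F.prod G ⋙ prodUncurried C

/-- The action of the Day convolution input on pairs of natural transformations. -/
noncomputable def dayInputMap {B : Type u} [Category.{v} B] {C : Type u'} [Category.{v'} C]
    [HasBinaryProducts C] {F F' G G' : B ⥤ C} (φ : F ⟶ F') (ψ : G ⟶ G') :
    dayInput F G ⟶ dayInput F' G' :=
  Functor.whiskerRight (NatTrans.prod φ ψ) (prodUncurried C)

/-- The category `Func_κ(B, C)` of `κ`-accessible functors `B ⥤ C`. -/
def AccFunc (κ : Cardinal.{w}) (B : Type u) [Category.{v} B]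
    (C : Type u') [Category.{v'} C] :=
  ObjectProperty.FullSubcategory fun F : B ⥤ C => PreservesCardinalFilteredColimits.{w} κ F

instance (κ : Cardinal.{w}) (B : Type u) [Category.{v} B]
    (C : Type u') [Category.{v'} C] : Category (AccFunc κ B C) :=
  ObjectProperty.FullSubcategory.category _

/-- The inclusion `Func_κ(B, C) ⥤ (B ⥤ C)`. -/
def accFuncInclusion (κ : Cardinal.{w}) (B : Type u) [Category.{v} B]
    (C : Type u') [Category.{v'} C] : AccFunc κ B C ⥤ (B ⥤ C) :=
  ObjectProperty.ι _

namespace DayAux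

open CategoryTheory CategoryTheory.Limits Opposite

theorem isFiltered_of_isCardinalFilteredCat {κ : Cardinal.{w}} (hκ : κ.IsRegular)
    (J : Type w) [SmallCategory J] (hJ : IsCardinalFilteredCat κ J) : IsFiltered J := by
  apply IsFiltered.of_cocone_nonempty.{w}
  intro A _ _ F
  have hinj : Function.Injective
      (fun f : Arrow A => (⟨f.left, f.right, f.hom⟩ : Σ (X : A) (Y : A), X ⟶ Y)) := by
    rintro ⟨l, r, h⟩ ⟨l', r', h'⟩ e
    dsimp at e
    obtain ⟨rfl, e⟩ := Sigma.mk.inj_iff.mp e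
    obtain ⟨rfl, e⟩ := Sigma.mk.inj_iff.mp (eq_of_heq e)
    cases eq_of_heq e
    rfl
  have : Finite (Arrow A) := Finite.of_injective _ hinj
  exact hJ A inferInstance ((Cardinal.lt_aleph0_of_finite _).trans_le hκ.aleph0_le) F

section TypeProd

variable {J : Type w} [SmallCategory J]

/-- The pointwise product of two `Type`-valued diagrams. -/
@[simps]
def typeProdDiagram (F G : J ⥤ Type v'') : J ⥤ Type v'' where
  obj j := F.obj j × G.obj j
  map f := TypeCat.ofHom fun p => (F.map f p.1, G.map f p.2)
  map_id j := by ext x <;> simp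
  map_comp f g := by ext x <;> simp

/-- The product of two cocones of `Type`-valued diagrams. -/
@[simps]
def typeProdCocone {F G : J ⥤ Type v''} (cF : Cocone F) (cG : Cocone G) :
    Cocone (typeProdDiagram F G) where
  pt := cF.pt × cG.pt
  ι :=
    { app := fun j => TypeCat.ofHom fun p => (cF.ι.app j p.1, cG.ι.app j p.2)
      naturality := fun j j' f => by
        ext x
        refine Prod.ext ?_ ?_
        · exact ConcreteCategory.congr_hom (cF.w f) x.1
        · exact ConcreteCategory.congr_hom (cG.w f) x.2 }

variable [IsFiltered J]

/-- A filtered colimit of products of types is the product of colimits. -/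
noncomputable def typeProdIsColimit {F G : J ⥤ Type v''} [HasColimit F] [HasColimit G]
    {cF : Cocone F} {cG : Cocone G} (hF : IsColimit cF) (hG : IsColimit cG) :
    IsColimit (typeProdCocone cF cG) := by
  apply Types.FilteredColimit.isColimitOf
  · rintro ⟨x, y⟩
    obtain ⟨j₁, x', hx⟩ := Types.jointly_surjective F hF x
    obtain ⟨j₂, y', hy⟩ := Types.jointly_surjective G hG y
    refine ⟨IsFiltered.max j₁ j₂,
      ⟨F.map (IsFiltered.leftToMax j₁ j₂) x', G.map (IsFiltered.rightToMax j₁ j₂) y'⟩, ?_⟩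
    have hx' := ConcreteCategory.congr_hom (cF.w (IsFiltered.leftToMax j₁ j₂)) x'
    have hy' := ConcreteCategory.congr_hom (cG.w (IsFiltered.rightToMax j₁ j₂)) y'
    simp only [types_comp_apply] at hx' hy'
    exact Prod.ext (hx'.trans hx).symm (hy'.trans hy).symm
  · rintro i j ⟨xi, yi⟩ ⟨xj, yj⟩ h
    have h1 : cF.ι.app i xi = cF.ι.app j xj := congrArg Prod.fst h
    have h2 : cG.ι.app i yi = cG.ι.app j yj := congrArg Prod.snd h
    obtain ⟨k₁, f₁, g₁, e₁⟩ := (Types.FilteredColimit.isColimit_eq_iff F hF).mp h1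
    obtain ⟨k₂, f₂, g₂, e₂⟩ := (Types.FilteredColimit.isColimit_eq_iff G hG).mp h2
    let l := IsFiltered.max k₁ k₂
    let p : k₁ ⟶ l := IsFiltered.leftToMax k₁ k₂
    let q : k₂ ⟶ l := IsFiltered.rightToMax k₁ k₂
    let a : i ⟶ l := f₁ ≫ p
    let b : j ⟶ l := g₁ ≫ p
    let a' : i ⟶ l := f₂ ≫ q
    let b' : j ⟶ l := g₂ ≫ q
    let s : l ⟶ IsFiltered.coeq a a' := IsFiltered.coeqHom a a'
    let t : IsFiltered.coeq a a' ⟶ IsFiltered.coeq (b ≫ s) (b' ≫ s) :=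
      IsFiltered.coeqHom (b ≫ s) (b' ≫ s)
    refine ⟨_, a ≫ s ≫ t, b ≫ s ≫ t, ?_⟩
    have hF' : F.map (a ≫ s ≫ t) xi = F.map (b ≫ s ≫ t) xj := by
      simp only [a, b, F.map_comp, types_comp_apply]
      rw [e₁]
    have hG' : G.map (a ≫ s ≫ t) yi = G.map (b ≫ s ≫ t) yj := by
      have h3 : a ≫ s ≫ t = a' ≫ s ≫ t := by
        rw [← Category.assoc, ← Category.assoc, IsFiltered.coeq_condition a a']
      have h4 : b ≫ s ≫ t = b' ≫ s ≫ t := by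
        rw [← Category.assoc, ← Category.assoc, IsFiltered.coeq_condition (b ≫ s) (b' ≫ s)]
      rw [h3, h4]
      simp only [a', b', G.map_comp, types_comp_apply]
      rw [e₂]
    exact Prod.ext hF' hG'

end TypeProd

section Dense

variable {C : Type u'} [Category.{v'} C]

/-- A dense set of objects jointly reflects isomorphisms. -/
theorem isIso_of_bijective_comp {S : Set C} (hdense : IsDenseSub S) {x y : C} (f : x ⟶ y)
    (hbij : ∀ s, s ∈ S → Function.Bijective (fun g : s ⟶ x => g ≫ f)) : IsIso f := by
  obtain ⟨hy⟩ := hdense y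
  obtain ⟨hx⟩ := hdense x
  have lift : ∀ e : CostructuredArrow (ObjectProperty.ι (· ∈ S)) y,
      { g : e.left.obj ⟶ x // g ≫ f = e.hom } := fun e =>
    ⟨((hbij _ e.left.property).2 e.hom).choose, ((hbij _ e.left.property).2 e.hom).choose_spec⟩
  let s₀ : Cocone (CostructuredArrow.proj (ObjectProperty.ι (· ∈ S)) y ⋙
      ObjectProperty.ι (· ∈ S)) :=
    { pt := x
      ι :=
        { app := fun e => (lift e).1
          naturality := fun e e' φ => by
            apply (hbij _ e.left.property).1
            show (φ.left.hom ≫ (lift e').1) ≫ f = ((lift e).1 ≫ 𝟙 x) ≫ f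
            rw [Category.comp_id, Category.assoc, (lift e').2, (lift e).2]
            simpa using CostructuredArrow.w φ } }
  let g : y ⟶ x := hy.desc s₀
  have hg1 : ∀ e, e.hom ≫ g = (lift e).1 := fun e => hy.fac s₀ e
  refine ⟨g, ?_, ?_⟩
  · -- f ≫ g = 𝟙 x
    apply hx.hom_ext
    intro e
    show e.hom ≫ f ≫ g = e.hom ≫ 𝟙 x
    have h1 : (e.hom ≫ f) ≫ g =
        (lift (CostructuredArrow.mk (Y := e.left) (e.hom ≫ f))).1 :=
      hg1 (CostructuredArrow.mk (Y := e.left) (e.hom ≫ f))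
    have h2 : (lift (CostructuredArrow.mk (Y := e.left) (e.hom ≫ f))).1 = e.hom := by
      apply (hbij _ e.left.property).1
      show (lift (CostructuredArrow.mk (Y := e.left) (e.hom ≫ f))).1 ≫ f = e.hom ≫ f
      rw [(lift _).2]
      rfl
    have hid : e.hom ≫ 𝟙 x = e.hom := Category.comp_id _
    rw [hid, ← Category.assoc, h1, h2]
  · -- g ≫ f = 𝟙 y
    apply hy.hom_ext
    intro e
    show e.hom ≫ g ≫ f = e.hom ≫ 𝟙 y
    have hid : e.hom ≫ 𝟙 y = e.hom := Category.comp_id _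
    rw [hid, ← Category.assoc, hg1 e, (lift e).2]

end Dense
section Coyoneda

variable {J : Type w} [SmallCategory J] {C : Type u'} [Category.{v'} C]

/-- A dense set of `J`-compact objects jointly detects colimits of shape `J`. -/
noncomputable def isColimitOfCoyoneda {S : Set C} (hdense : IsDenseSub S)
    (hcompact : ∀ s, s ∈ S → PreservesColimitsOfShape J (coyoneda.obj (op s)))
    [HasColimitsOfShape J C] {R : J ⥤ C} (t : Cocone R)
    (h : ∀ s, s ∈ S →
      Nonempty (IsColimit ((coyoneda.obj (op s) ⋙ uliftFunctor.{w, v'}).mapCocone t))) :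
    IsColimit t := by
  have : IsIso ((colimit.isColimit R).desc t) := by
    apply isIso_of_bijective_comp hdense
    intro s hs
    haveI := hcompact s hs
    have h1 : IsColimit ((coyoneda.obj (op s) ⋙ uliftFunctor.{w, v'}).mapCocone
        (colimit.cocone R)) :=
      isColimitOfPreserves (coyoneda.obj (op s) ⋙ uliftFunctor.{w, v'}) (colimit.isColimit R)
    obtain ⟨h2⟩ := h s hs
    set Hs := coyoneda.obj (op s) ⋙ uliftFunctor.{w, v'} with hHsdef
    set θ := (colimit.isColimit R).desc t with hθdef
    have key : ∀ j, (Hs.mapCocone (colimit.cocone R)).ι.app j ≫ Hs.map θ =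
        (Hs.mapCocone t).ι.app j := by
      intro j
      show Hs.map _ ≫ Hs.map θ = Hs.map _
      rw [← Hs.map_comp]
      congr 1
      exact (colimit.isColimit R).fac t j
    have huniq : Hs.map θ = (h1.coconePointUniqueUpToIso h2).hom := h1.uniq (Hs.mapCocone t) _ key
    have hiso : IsIso (Hs.map θ) := by rw [huniq]; infer_instance
    have hbijlift : Function.Bijective (Hs.map θ) := (isIso_iff_bijective _).mp hiso
    exact (Equiv.ulift.bijective.comp hbijlift).comp Equiv.ulift.symm.bijective
  exact IsColimit.ofPointIso (colimit.isColimit R)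

end Coyoneda

section ProdC

variable {C : Type u'} [Category.{v'} C] [HasBinaryProducts C]

theorem prodUncurried_map {X Y : C × C} (f : X ⟶ Y) :
    (prodUncurried C).map f = Limits.prod.map f.1 f.2 := by
  change prod.map f.1 (𝟙 X.2) ≫ prod.map (𝟙 Y.1) f.2 = _
  rw [prod.map_map, Category.comp_id, Category.id_comp]

theorem dayInputMap_app {B : Type u} [Category.{v} B] {F F' G G' : B ⥤ C}
    (φ : F ⟶ F') (ψ : G ⟶ G') (z : B × B) :
    (dayInputMap φ ψ).app z = (prodUncurried C).map ((φ.app z.1, ψ.app z.2) :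
      ((F.obj z.1, G.obj z.2) : C × C) ⟶ (F'.obj z.1, G'.obj z.2)) := rfl

variable {J : Type w} [SmallCategory J]

/-- The cocone on a pair of diagrams induced by a pair of cocones. -/
@[simps]
def pairCocone {U V : J ⥤ C} (cU : Cocone U) (cV : Cocone V) : Cocone (U.prod' V) where
  pt := (cU.pt, cV.pt)
  ι :=
    { app := fun j => (cU.ι.app j, cV.ι.app j)
      naturality := fun j j' φ => by
        apply Prod.ext
        · show U.map φ ≫ cU.ι.app j' = cU.ι.app j ≫ 𝟙 _
          simp
        · show V.map φ ≫ cV.ι.app j' = cV.ι.app j ≫ 𝟙 _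
          simp }

/-- In a category with a dense set of `J`-compact objects, binary products commute
with colimits of shape `J`. -/
noncomputable def prodMapIsColimit [IsFiltered J] {S : Set C} (hdense : IsDenseSub S)
    (hcompact : ∀ s, s ∈ S → PreservesColimitsOfShape J (coyoneda.obj (op s)))
    [HasColimitsOfShape J C] {U V : J ⥤ C} {cU : Cocone U} {cV : Cocone V}
    (hU : IsColimit cU) (hV : IsColimit cV) :
    IsColimit ((prodUncurried C).mapCocone (pairCocone cU cV)) := by
  apply isColimitOfCoyoneda hdense hcompact
  intro s hs
  haveI := hcompact s hs
  set Hs := coyoneda.obj (op s) ⋙ uliftFunctor.{w, v'} with hHsdef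
  have h1 : IsColimit (Hs.mapCocone cU) := isColimitOfPreserves Hs hU
  have h2 : IsColimit (Hs.mapCocone cV) := isColimitOfPreserves Hs hV
  let e : ∀ a b : C, (ULift.{w} (s ⟶ a) × ULift.{w} (s ⟶ b)) ≃ ULift.{w} (s ⟶ a ⨯ b) :=
    fun a b =>
    { toFun := fun p => ⟨Limits.prod.lift p.1.down p.2.down⟩
      invFun := fun q => (⟨q.down ≫ Limits.prod.fst⟩, ⟨q.down ≫ Limits.prod.snd⟩)
      left_inv := fun p => by simp only [prod.lift_fst, prod.lift_snd]
      right_inv := fun q => by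
        dsimp
        congr 1
        apply Limits.prod.hom_ext <;> simp only [prod.lift_fst, prod.lift_snd] }
  let iso : typeProdDiagram (U ⋙ Hs) (V ⋙ Hs) ≅ (U.prod' V ⋙ prodUncurried C) ⋙ Hs :=
    NatIso.ofComponents (fun j => Equiv.toIso (e (U.obj j) (V.obj j)))
      (fun {j j'} f => by
        ext p
        show (e _ _) ((U ⋙ Hs).map f p.1, (V ⋙ Hs).map f p.2) =
          Hs.map ((prodUncurried C).map ((U.prod' V).map f)) ((e _ _) p)
        have hm : (prodUncurried C).map ((U.prod' V).map f) =
            Limits.prod.map (U.map f) (V.map f) := prodUncurried_map _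
        rw [hm]
        apply ULift.ext
        apply Limits.prod.hom_ext
        · change prod.lift (p.1.down ≫ U.map f) (p.2.down ≫ V.map f) ≫ prod.fst =
            (prod.lift p.1.down p.2.down ≫ prod.map (U.map f) (V.map f)) ≫ prod.fst
          simp [prod.lift_fst, prod.map_fst]
        · change prod.lift (p.1.down ≫ U.map f) (p.2.down ≫ V.map f) ≫ prod.snd =
            (prod.lift p.1.down p.2.down ≫ prod.map (U.map f) (V.map f)) ≫ prod.snd
          simp [prod.lift_snd, prod.map_snd])
  refine ⟨(IsColimit.equivOfNatIsoOfIso iso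
    (typeProdCocone (Hs.mapCocone cU) (Hs.mapCocone cV))
    (Hs.mapCocone ((prodUncurried C).mapCocone (pairCocone cU cV))) ?_)
    (typeProdIsColimit h1 h2)⟩
  refine Cocones.ext (Equiv.toIso (e cU.pt cV.pt)) (fun j => ?_)
  ext p
  show (e cU.pt cV.pt) ((typeProdCocone (Hs.mapCocone cU) (Hs.mapCocone cV)).ι.app j
      ((iso.inv.app j) p)) =
    Hs.map ((prodUncurried C).map ((pairCocone cU cV).ι.app j)) p
  have hm : (prodUncurried C).map ((pairCocone cU cV).ι.app j) =
      Limits.prod.map (cU.ι.app j) (cV.ι.app j) := prodUncurried_map _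
  rw [hm]
  apply ULift.ext
  apply Limits.prod.hom_ext
  · change prod.lift ((p.down ≫ prod.fst) ≫ cU.ι.app j) ((p.down ≫ prod.snd) ≫ cV.ι.app j) ≫
      prod.fst = (p.down ≫ prod.map (cU.ι.app j) (cV.ι.app j)) ≫ prod.fst
    simp only [prod.lift_fst]
    exact (Category.assoc _ _ _).trans ((congrArg (p.down ≫ ·) (prod.map_fst _ _)).symm.trans
      (Category.assoc _ _ _).symm)
  · change prod.lift ((p.down ≫ prod.fst) ≫ cU.ι.app j) ((p.down ≫ prod.snd) ≫ cV.ι.app j) ≫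
      prod.snd = (p.down ≫ prod.map (cU.ι.app j) (cV.ι.app j)) ≫ prod.snd
    simp only [prod.lift_snd]
    exact (Category.assoc _ _ _).trans ((congrArg (p.down ≫ ·) (prod.map_snd _ _)).symm.trans
      (Category.assoc _ _ _).symm)

end ProdC
section ProdCat

variable {J : Type w} [SmallCategory J] {C : Type u} [Category.{v} C]
  {D : Type u''} [Category.{v''} D]

/-- The first projection of a colimit cocone in a product category is a colimit cocone. -/
noncomputable def isColimitFst {K : J ⥤ C × D} {c : Cocone K} (hc : IsColimit c) :
    IsColimit ((CategoryTheory.Prod.fst C D).mapCocone c) := by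
  refine { desc := fun s => ?_, fac := fun s j => ?_, uniq := fun s m hm => ?_ }
  all_goals
    let s' : Cocone K :=
      { pt := (s.pt, c.pt.2)
        ι :=
          { app := fun j => (s.ι.app j, (c.ι.app j).2)
            naturality := fun j j' φ => by
              apply Prod.ext
              · exact (s.w φ).trans (Category.comp_id (s.ι.app j)).symm
              · exact (congrArg Prod.snd (c.w φ)).trans
                  (Category.comp_id ((c.ι.app j).2)).symm } }
  · exact (hc.desc s').1
  · exact congrArg Prod.fst (hc.fac s' j)
  · have huniq : ((m, 𝟙 c.pt.2) : c.pt ⟶ (s.pt, c.pt.2)) = hc.desc s' := by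
      apply hc.uniq s'
      intro j
      apply Prod.ext
      · exact hm j
      · exact Category.comp_id ((c.ι.app j).2)
    exact congrArg Prod.fst huniq

/-- The second projection of a colimit cocone in a product category is a colimit cocone. -/
noncomputable def isColimitSnd {K : J ⥤ C × D} {c : Cocone K} (hc : IsColimit c) :
    IsColimit ((CategoryTheory.Prod.snd C D).mapCocone c) := by
  refine { desc := fun s => ?_, fac := fun s j => ?_, uniq := fun s m hm => ?_ }
  all_goals
    let s' : Cocone K :=
      { pt := (c.pt.1, s.pt)
        ι :=
          { app := fun j => ((c.ι.app j).1, s.ι.app j)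
            naturality := fun j j' φ => by
              apply Prod.ext
              · exact (congrArg Prod.fst (c.w φ)).trans
                  (Category.comp_id ((c.ι.app j).1)).symm
              · exact (s.w φ).trans (Category.comp_id (s.ι.app j)).symm } }
  · exact (hc.desc s').2
  · exact congrArg Prod.snd (hc.fac s' j)
  · have huniq : ((𝟙 c.pt.1, m) : c.pt ⟶ (c.pt.1, s.pt)) = hc.desc s' := by
      apply hc.uniq s'
      intro j
      apply Prod.ext
      · exact Category.comp_id ((c.ι.app j).1)
      · exact hm j
    exact congrArg Prod.snd huniq

end ProdCat

section Closure

variable {B : Type u} [Category.{v} B] {C : Type u'} [Category.{v'} C]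

/-- The point of a colimit cocone of `κ`-accessible functors is `κ`-accessible. -/
theorem preservesCardinalFilteredColimits_colimit (κ : Cardinal.{w})
    {J : Type w} [SmallCategory J] [HasColimitsOfShape J C]
    {E : J ⥤ B ⥤ C} (hE : ∀ j, PreservesCardinalFilteredColimits κ (E.obj j))
    {c : Cocone E} (hc : IsColimit c) : PreservesCardinalFilteredColimits κ c.pt := by
  intro J' instJ' hJ'
  constructor
  intro b
  constructor
  intro t ht
  have hev : ∀ x : B, IsColimit (((evaluation B C).obj x).mapCocone c) :=
    fun x => isColimitOfPreserves _ hc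
  have hEt : ∀ j, IsColimit ((E.obj j).mapCocone t) := fun j =>
    haveI := hE j J' instJ' hJ'
    isColimitOfPreserves (E.obj j) ht
  have desc1 : ∀ (s : Cocone (b ⋙ c.pt)) (j : J),
      { d : (E.obj j).obj t.pt ⟶ s.pt //
        ∀ j' : J', (E.obj j).map (t.ι.app j') ≫ d =
          (c.ι.app j).app (b.obj j') ≫ s.ι.app j' } := fun s j =>
    ⟨(hEt j).desc ((Cocone.precompose (Functor.whiskerLeft b (c.ι.app j))).obj s),
      fun j' => (hEt j).fac _ j'⟩
  have hw : ∀ {j₁ j₂ : J} (φ : j₁ ⟶ j₂) (z : B),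
      (E.map φ).app z ≫ (c.ι.app j₂).app z = (c.ι.app j₁).app z := fun φ z =>
    NatTrans.congr_app (c.w φ) z
  let sE : ∀ s : Cocone (b ⋙ c.pt), Cocone (E ⋙ (evaluation B C).obj t.pt) := fun s =>
    { pt := s.pt
      ι :=
        { app := fun j => (desc1 s j).1
          naturality := fun j₁ j₂ φ => by
            apply (hEt j₁).hom_ext
            intro j'
            have h1 : (E.obj j₁).map (t.ι.app j') ≫ (E.map φ).app t.pt =
                (E.map φ).app (b.obj j') ≫ (E.obj j₂).map (t.ι.app j') :=
              (E.map φ).naturality (t.ι.app j')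
            have h2 := (desc1 s j₂).2 j'
            have h3 := (desc1 s j₁).2 j'
            show (E.obj j₁).map (t.ι.app j') ≫ (E.map φ).app t.pt ≫ (desc1 s j₂).1 =
              (E.obj j₁).map (t.ι.app j') ≫ (desc1 s j₁).1 ≫ 𝟙 s.pt
            simp only [Category.comp_id]
            simp only [← Category.assoc, h1]
            simp only [Category.assoc, h2, h3]
            simp only [← Category.assoc, hw φ (b.obj j')] } }
  have hsE : ∀ (s : Cocone (b ⋙ c.pt)) (j : J),
      (c.ι.app j).app t.pt ≫ (hev t.pt).desc (sE s) = (desc1 s j).1 :=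
    fun s j => (hev t.pt).fac (sE s) j
  refine ⟨{ desc := fun s => (hev t.pt).desc (sE s), fac := fun s j' => ?_,
            uniq := fun s m hm => ?_ }⟩
  · -- fac
    apply (hev (b.obj j')).hom_ext
    intro j
    have h1 : (c.ι.app j).app (b.obj j') ≫ c.pt.map (t.ι.app j') =
        (E.obj j).map (t.ι.app j') ≫ (c.ι.app j).app t.pt :=
      ((c.ι.app j).naturality (t.ι.app j')).symm
    show (c.ι.app j).app (b.obj j') ≫ c.pt.map (t.ι.app j') ≫ (hev t.pt).desc (sE s) =
      (c.ι.app j).app (b.obj j') ≫ s.ι.app j'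
    simp only [← Category.assoc, h1]
    simp only [Category.assoc, hsE s j]
    exact (desc1 s j).2 j'
  · -- uniq
    apply (hev t.pt).hom_ext
    intro j
    show (c.ι.app j).app t.pt ≫ m = (c.ι.app j).app t.pt ≫ (hev t.pt).desc (sE s)
    rw [hsE s j]
    apply (hEt j).hom_ext
    intro j'
    have h1 : (E.obj j).map (t.ι.app j') ≫ (c.ι.app j).app t.pt =
        (c.ι.app j).app (b.obj j') ≫ c.pt.map (t.ι.app j') :=
      (c.ι.app j).naturality (t.ι.app j')
    show (E.obj j).map (t.ι.app j') ≫ (c.ι.app j).app t.pt ≫ m =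
      (E.obj j).map (t.ι.app j') ≫ (desc1 s j).1
    simp only [← Category.assoc, h1]
    simp only [Category.assoc, (desc1 s j).2 j']
    have h2 := hm j'
    simp only [Functor.mapCocone_ι_app, Functor.comp_obj, evaluation_obj_obj] at h2
    simp only [h2]

end Closure

end DayAux

/-- STATEMENT 19: let `κ` be a regular cardinal such that `B` and `C` are
locally `κ`-presentable (with finite products) and such that the Day
convolution of any two `κ`-accessible functors is again `κ`-accessible.  Then
the Day convolution bifunctor `∗ : Func_κ(B, C) × Func_κ(B, C) ⥤ Func_κ(B, C)`
(a functor `D` whose values carry pointwise left Kan extension structures `α`,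
naturally in both variables) is itself `κ`-accessible, i.e. it preserves
`κ`-filtered colimits. -/
theorem day_bifunctor_accessible
    (κ : Cardinal.{w}) (hκ : κ.IsRegular)
    (B : Type u) [Category.{v} B] (C : Type u') [Category.{v'} C]
    [HasBinaryProducts B] [HasBinaryProducts C]
    (hB : IsLocallyPresentable.{w} κ B) (hC : IsLocallyPresentable.{w} κ C)
    (D : AccFunc.{w} κ B C × AccFunc.{w} κ B C ⥤ AccFunc.{w} κ B C)
    (α : ∀ P : AccFunc.{w} κ B C × AccFunc.{w} κ B C,
      dayInput ((accFuncInclusion κ B C).obj P.1) ((accFuncInclusion κ B C).obj P.2) ⟶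
        prodUncurried B ⋙ (accFuncInclusion κ B C).obj (D.obj P))
    (hα : ∀ P, Nonempty
      ((CategoryTheory.Functor.LeftExtension.mk
        ((accFuncInclusion κ B C).obj (D.obj P)) (α P)).IsPointwiseLeftKanExtension))
    (hnat : ∀ (P Q : AccFunc.{w} κ B C × AccFunc.{w} κ B C)
        (η₁ : P.1 ⟶ Q.1) (η₂ : P.2 ⟶ Q.2),
      dayInputMap ((accFuncInclusion κ B C).map η₁) ((accFuncInclusion κ B C).map η₂) ≫ α Q =
        α P ≫ Functor.whiskerLeft (prodUncurried B)
          ((accFuncInclusion κ B C).map (D.map ((η₁, η₂) : P ⟶ Q)))) :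
    PreservesCardinalFilteredColimits.{w} κ D := by
  intro J instJ hJ
  haveI : IsFiltered J := DayAux.isFiltered_of_isCardinalFilteredCat hκ J hJ
  haveI : HasColimitsOfSize.{w, w} C := hC.hasColimits
  obtain ⟨S, hSsmall, hScompact, hSdense⟩ := hC.exists_dense_compacts
  have hScompactJ : ∀ s, s ∈ S → PreservesColimitsOfShape J (coyoneda.obj (op s)) :=
    fun s hs => hScompact s hs J instJ hJ
  haveI hfull : (accFuncInclusion κ B C).Full :=
    inferInstanceAs ((ObjectProperty.ι _).Full)
  haveI hfaithful : (accFuncInclusion κ B C).Faithful :=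
    inferInstanceAs ((ObjectProperty.ι _).Faithful)
  constructor
  intro K
  constructor
  intro c hc
  -- Step 1: the two projected cocones in `AccFunc` are colimits.
  have hc1 := DayAux.isColimitFst hc
  have hc2 := DayAux.isColimitSnd hc
  -- Step 2: their images under the inclusion are colimits in `B ⥤ C`.
  have hd : ∀ (pr : AccFunc.{w} κ B C × AccFunc.{w} κ B C ⥤ AccFunc.{w} κ B C)
      (hpr : IsColimit (pr.mapCocone c)),
      IsColimit ((accFuncInclusion κ B C).mapCocone (pr.mapCocone c)) := by
    intro pr hpr
    set L := K ⋙ pr with hL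
    have hq : IsColimit (colimit.cocone (L ⋙ accFuncInclusion κ B C)) := colimit.isColimit _
    have acc : PreservesCardinalFilteredColimits κ
        (colimit.cocone (L ⋙ accFuncInclusion κ B C)).pt :=
      DayAux.preservesCardinalFilteredColimits_colimit κ (fun j => (L.obj j).property) hq
    let q' : Cocone L :=
      { pt := ⟨(colimit.cocone (L ⋙ accFuncInclusion κ B C)).pt, acc⟩
        ι :=
          { app := fun j => ObjectProperty.homMk ((colimit.cocone (L ⋙ accFuncInclusion κ B C)).ι.app j)
            naturality := fun j j' f => by
              exact ObjectProperty.hom_ext (P := fun F : B ⥤ C => PreservesCardinalFilteredColimits.{w} κ F)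
                ((colimit.cocone (L ⋙ accFuncInclusion κ B C)).ι.naturality f) } }
    have hq'map : IsColimit ((accFuncInclusion κ B C).mapCocone q') := hq
    have hq' : IsColimit q' := isColimitOfReflects (accFuncInclusion κ B C) hq'map
    exact IsColimit.ofIsoColimit hq'map
      ((Cocones.functoriality L (accFuncInclusion κ B C)).mapIso
        (hq'.uniqueUpToIso hpr))
  have hd₁ := hd (CategoryTheory.Prod.fst _ _) hc1
  have hd₂ := hd (CategoryTheory.Prod.snd _ _) hc2
  -- Step 3: pointwise evaluation gives colimits in `C`, and products of them.
  have hP : ∀ z : B × B, IsColimit ((prodUncurried C).mapCocone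
      (DayAux.pairCocone
        (((evaluation B C).obj z.1).mapCocone
          ((accFuncInclusion κ B C).mapCocone ((CategoryTheory.Prod.fst _ _).mapCocone c)))
        (((evaluation B C).obj z.2).mapCocone
          ((accFuncInclusion κ B C).mapCocone ((CategoryTheory.Prod.snd _ _).mapCocone c))))) :=
    fun z => DayAux.prodMapIsColimit hSdense hScompactJ
      (isColimitOfPreserves _ hd₁) (isColimitOfPreserves _ hd₂)
  -- Kan extension colimits
  have hKan : ∀ (P : AccFunc.{w} κ B C × AccFunc.{w} κ B C) (bb : B),
      IsColimit ((CategoryTheory.Functor.LeftExtension.mk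
        ((accFuncInclusion κ B C).obj (D.obj P)) (α P)).coconeAt bb) :=
    fun P bb => (hα P).some bb
  have hnat' : ∀ {P Q : AccFunc.{w} κ B C × AccFunc.{w} κ B C} (η : P ⟶ Q) (z : B × B),
      (dayInputMap ((accFuncInclusion κ B C).map η.1)
          ((accFuncInclusion κ B C).map η.2)).app z ≫ (α Q).app z =
        (α P).app z ≫
          ((accFuncInclusion κ B C).map (D.map η)).app ((prodUncurried B).obj z) :=
    fun {P Q} η z => NatTrans.congr_app (hnat P Q η.1 η.2) z
  -- Step 4: conclude by reflecting along the inclusion and evaluations.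
  refine ⟨isColimitOfReflects (accFuncInclusion κ B C)
    (evaluationJointlyReflectsColimits _ fun bb => ?_)⟩
  -- the target cocone, evaluated at `bb`
  let sJ : ∀ (s : Cocone (((K ⋙ D) ⋙ accFuncInclusion κ B C) ⋙ (evaluation B C).obj bb))
      (g : CostructuredArrow (prodUncurried B) bb),
      Cocone (((((K ⋙ CategoryTheory.Prod.fst _ _) ⋙ accFuncInclusion κ B C) ⋙
          (evaluation B C).obj g.left.1).prod'
        (((K ⋙ CategoryTheory.Prod.snd _ _) ⋙ accFuncInclusion κ B C) ⋙
          (evaluation B C).obj g.left.2)) ⋙ prodUncurried C) := fun s g =>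
    { pt := s.pt
      ι :=
        { app := fun j => ((α (K.obj j)).app g.left ≫
            ((accFuncInclusion κ B C).obj (D.obj (K.obj j))).map g.hom) ≫ s.ι.app j
          naturality := fun j j₂ φ => by
            have h1 := hnat' (K.map φ) g.left
            have h2 : ((accFuncInclusion κ B C).map (D.map (K.map φ))).app
                  ((prodUncurried B).obj g.left) ≫
                  ((accFuncInclusion κ B C).obj (D.obj (K.obj j₂))).map g.hom =
                ((accFuncInclusion κ B C).obj (D.obj (K.obj j))).map g.hom ≫
                  ((accFuncInclusion κ B C).map (D.map (K.map φ))).app bb :=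
              (((accFuncInclusion κ B C).map (D.map (K.map φ))).naturality g.hom).symm
            have h3 : ((accFuncInclusion κ B C).map (D.map (K.map φ))).app bb ≫ s.ι.app j₂ =
                s.ι.app j := s.w φ
            have key : (dayInputMap ((accFuncInclusion κ B C).map (K.map φ).1)
                ((accFuncInclusion κ B C).map (K.map φ).2)).app g.left ≫
                (((α (K.obj j₂)).app g.left ≫
                  ((accFuncInclusion κ B C).obj (D.obj (K.obj j₂))).map g.hom) ≫ s.ι.app j₂) =
              ((α (K.obj j)).app g.left ≫
                  ((accFuncInclusion κ B C).obj (D.obj (K.obj j))).map g.hom) ≫ s.ι.app j := by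
              simp only [← Category.assoc]
              rw [h1]
              simp only [Category.assoc]
              rw [reassoc_of% h2, h3]
            exact key.trans (Category.comp_id _).symm } }
  let sE : ∀ s : Cocone (((K ⋙ D) ⋙ accFuncInclusion κ B C) ⋙ (evaluation B C).obj bb),
      Cocone (CostructuredArrow.proj (prodUncurried B) bb ⋙
        dayInput ((accFuncInclusion κ B C).obj c.pt.1)
          ((accFuncInclusion κ B C).obj c.pt.2)) := fun s =>
    { pt := s.pt
      ι :=
        { app := fun g => (hP g.left).desc (sJ s g)
          naturality := fun g g' ψ => by
            apply (hP g.left).hom_ext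
            intro j
            have h4 : (dayInputMap ((accFuncInclusion κ B C).map (c.ι.app j).1)
                  ((accFuncInclusion κ B C).map (c.ι.app j).2)).app g.left ≫
                (dayInput ((accFuncInclusion κ B C).obj c.pt.1)
                  ((accFuncInclusion κ B C).obj c.pt.2)).map ψ.left =
              (dayInput ((accFuncInclusion κ B C).obj (K.obj j).1)
                  ((accFuncInclusion κ B C).obj (K.obj j).2)).map ψ.left ≫
                (dayInputMap ((accFuncInclusion κ B C).map (c.ι.app j).1)
                  ((accFuncInclusion κ B C).map (c.ι.app j).2)).app g'.left :=
              ((dayInputMap ((accFuncInclusion κ B C).map (c.ι.app j).1)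
                ((accFuncInclusion κ B C).map (c.ι.app j).2)).naturality ψ.left).symm
            have h5 : (dayInput ((accFuncInclusion κ B C).obj (K.obj j).1)
                  ((accFuncInclusion κ B C).obj (K.obj j).2)).map ψ.left ≫
                ((α (K.obj j)).app g'.left ≫
                  ((accFuncInclusion κ B C).obj (D.obj (K.obj j))).map g'.hom) =
                (α (K.obj j)).app g.left ≫
                  ((accFuncInclusion κ B C).obj (D.obj (K.obj j))).map g.hom :=
              ((CategoryTheory.Functor.LeftExtension.mk
                ((accFuncInclusion κ B C).obj (D.obj (K.obj j))) (α (K.obj j))).coconeAt bb).w ψ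
            have hfg' : (dayInputMap ((accFuncInclusion κ B C).map (c.ι.app j).1)
                  ((accFuncInclusion κ B C).map (c.ι.app j).2)).app g'.left ≫
                (hP g'.left).desc (sJ s g') =
                ((α (K.obj j)).app g'.left ≫
                  ((accFuncInclusion κ B C).obj (D.obj (K.obj j))).map g'.hom) ≫ s.ι.app j :=
              (hP g'.left).fac (sJ s g') j
            have hfg : (dayInputMap ((accFuncInclusion κ B C).map (c.ι.app j).1)
                  ((accFuncInclusion κ B C).map (c.ι.app j).2)).app g.left ≫
                (hP g.left).desc (sJ s g) =
                ((α (K.obj j)).app g.left ≫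
                  ((accFuncInclusion κ B C).obj (D.obj (K.obj j))).map g.hom) ≫ s.ι.app j :=
              (hP g.left).fac (sJ s g) j
            have key : (dayInputMap ((accFuncInclusion κ B C).map (c.ι.app j).1)
                  ((accFuncInclusion κ B C).map (c.ι.app j).2)).app g.left ≫
                ((dayInput ((accFuncInclusion κ B C).obj c.pt.1)
                  ((accFuncInclusion κ B C).obj c.pt.2)).map ψ.left ≫
                (hP g'.left).desc (sJ s g')) =
              (dayInputMap ((accFuncInclusion κ B C).map (c.ι.app j).1)
                  ((accFuncInclusion κ B C).map (c.ι.app j).2)).app g.left ≫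
                (hP g.left).desc (sJ s g) := by
              erw [← Category.assoc, h4, Category.assoc, hfg']
              simp only [Category.assoc]
              rw [reassoc_of% h5, hfg]
              simp only [Category.assoc]
            exact key.trans (congrArg (fun q => (dayInputMap ((accFuncInclusion κ B C).map (c.ι.app j).1)
              ((accFuncInclusion κ B C).map (c.ι.app j).2)).app g.left ≫ q)
              (Category.comp_id _).symm) } }
  refine { desc := fun s => (hKan c.pt bb).desc (sE s), fac := fun s j => ?_,
           uniq := fun s m hm => ?_ }
  · -- fac
    apply (hKan (K.obj j) bb).hom_ext
    intro g
    have h1 := hnat' (P := K.obj j) (Q := c.pt) (c.ι.app j) g.left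
    have h2 : ((accFuncInclusion κ B C).map (D.map (c.ι.app j))).app
          ((prodUncurried B).obj g.left) ≫
          ((accFuncInclusion κ B C).obj (D.obj c.pt)).map g.hom =
        ((accFuncInclusion κ B C).obj (D.obj (K.obj j))).map g.hom ≫
          ((accFuncInclusion κ B C).map (D.map (c.ι.app j))).app bb :=
      (((accFuncInclusion κ B C).map (D.map (c.ι.app j))).naturality g.hom).symm
    have h3 : ((α c.pt).app g.left ≫
          ((accFuncInclusion κ B C).obj (D.obj c.pt)).map g.hom) ≫
          (hKan c.pt bb).desc (sE s) = (hP g.left).desc (sJ s g) :=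
      (hKan c.pt bb).fac (sE s) g
    have h4 : (dayInputMap ((accFuncInclusion κ B C).map (c.ι.app j).1)
          ((accFuncInclusion κ B C).map (c.ι.app j).2)).app g.left ≫
        (hP g.left).desc (sJ s g) =
        ((α (K.obj j)).app g.left ≫
          ((accFuncInclusion κ B C).obj (D.obj (K.obj j))).map g.hom) ≫ s.ι.app j :=
      (hP g.left).fac (sJ s g) j
    show ((α (K.obj j)).app g.left ≫
        ((accFuncInclusion κ B C).obj (D.obj (K.obj j))).map g.hom) ≫
        ((accFuncInclusion κ B C).map (D.map (c.ι.app j))).app bb ≫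
        (hKan c.pt bb).desc (sE s) =
      ((α (K.obj j)).app g.left ≫
        ((accFuncInclusion κ B C).obj (D.obj (K.obj j))).map g.hom) ≫ s.ι.app j
    have e1 : ((α (K.obj j)).app g.left ≫
          ((accFuncInclusion κ B C).obj (D.obj (K.obj j))).map g.hom) ≫
          ((accFuncInclusion κ B C).map (D.map (c.ι.app j))).app bb =
        (dayInputMap ((accFuncInclusion κ B C).map (c.ι.app j).1)
          ((accFuncInclusion κ B C).map (c.ι.app j).2)).app g.left ≫
          (α c.pt).app g.left ≫ ((accFuncInclusion κ B C).obj (D.obj c.pt)).map g.hom := by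
      rw [Category.assoc, ← h2, ← Category.assoc, ← h1, Category.assoc]
    exact (Category.assoc _ _ _).symm.trans ((congrArg (· ≫ (hKan c.pt bb).desc (sE s)) e1).trans
      ((Category.assoc _ _ _).trans ((congrArg ((dayInputMap ((accFuncInclusion κ B C).map (c.ι.app j).1)
        ((accFuncInclusion κ B C).map (c.ι.app j).2)).app g.left ≫ ·) h3).trans h4)))
  · -- uniq
    apply (hKan c.pt bb).hom_ext
    intro g
    have h3 : ((α c.pt).app g.left ≫
          ((accFuncInclusion κ B C).obj (D.obj c.pt)).map g.hom) ≫
          (hKan c.pt bb).desc (sE s) = (hP g.left).desc (sJ s g) :=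
      (hKan c.pt bb).fac (sE s) g
    show ((α c.pt).app g.left ≫
        ((accFuncInclusion κ B C).obj (D.obj c.pt)).map g.hom) ≫ m =
      ((α c.pt).app g.left ≫
        ((accFuncInclusion κ B C).obj (D.obj c.pt)).map g.hom) ≫ (hKan c.pt bb).desc (sE s)
    rw [h3]
    apply (hP g.left).hom_ext
    intro j
    have h1 := hnat' (P := K.obj j) (Q := c.pt) (c.ι.app j) g.left
    have h2 : ((accFuncInclusion κ B C).map (D.map (c.ι.app j))).app
          ((prodUncurried B).obj g.left) ≫
          ((accFuncInclusion κ B C).obj (D.obj c.pt)).map g.hom =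
        ((accFuncInclusion κ B C).obj (D.obj (K.obj j))).map g.hom ≫
          ((accFuncInclusion κ B C).map (D.map (c.ι.app j))).app bb :=
      (((accFuncInclusion κ B C).map (D.map (c.ι.app j))).naturality g.hom).symm
    have h4 : (dayInputMap ((accFuncInclusion κ B C).map (c.ι.app j).1)
          ((accFuncInclusion κ B C).map (c.ι.app j).2)).app g.left ≫
        (hP g.left).desc (sJ s g) =
        ((α (K.obj j)).app g.left ≫
          ((accFuncInclusion κ B C).obj (D.obj (K.obj j))).map g.hom) ≫ s.ι.app j :=
      (hP g.left).fac (sJ s g) j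
    have hm' : ((accFuncInclusion κ B C).map (D.map (c.ι.app j))).app bb ≫ m = s.ι.app j :=
      hm j
    show (dayInputMap ((accFuncInclusion κ B C).map (c.ι.app j).1)
          ((accFuncInclusion κ B C).map (c.ι.app j).2)).app g.left ≫
        ((α c.pt).app g.left ≫
          ((accFuncInclusion κ B C).obj (D.obj c.pt)).map g.hom) ≫ m =
      (dayInputMap ((accFuncInclusion κ B C).map (c.ι.app j).1)
          ((accFuncInclusion κ B C).map (c.ι.app j).2)).app g.left ≫
        (hP g.left).desc (sJ s g)
    rw [h4, ← Category.assoc, ← Category.assoc, h1, Category.assoc, Category.assoc,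
      reassoc_of% h2, hm', ← Category.assoc]
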